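/- arXiv:1506.07481 — 2 statements merged into one kernel-verified Lean document; each statement's English description precedes it below -/
import Mathlib

section
/- Let U ⊆ ℝ⁴ be open and let F = f₀ + f₁·i + f₂·j + f₃·ij : U → Cl(1,1) have C² components satisfying the left Cl(1,1)-differentiability system on U: ∂₀f₀ = ∂₁f₁ = ∂₂f₂ = ∂₃f₃; ∂₀f₁ = −∂₁f₀ = −∂₂f₃ = ∂₃f₂; ∂₀f₂ = ∂₁f₃ = ∂₂f₀ = ∂₃f₁; ∂₀f₃ = −∂₁f₂ = −∂₂f₁ = ∂₃f₀. Then each component fₗ is ultra-hyperbolic on U, i.e., Δ₍₂,₂₎fₗ = 0 on U. -/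
open Filter Topology Quaternion

noncomputable section

abbrev SQ : Type := ℍ[ℝ, -1, 1]

def qi : SQ := ⟨0, 1, 0, 0⟩
def qj : SQ := ⟨0, 0, 1, 0⟩
def qk : SQ := ⟨0, 0, 0, 1⟩

/-- Partial derivative of a real-valued function on `Fin n → ℝ` in the `l`-th
coordinate direction. -/
def pd {n : ℕ} (l : Fin n) (f : (Fin n → ℝ) → ℝ) (x : Fin n → ℝ) : ℝ :=
  fderiv ℝ f x (Pi.single l 1)

/-- Componentwise partial derivative of a split-quaternion-valued function. -/
def pdQ {n : ℕ} (l : Fin n) (F : (Fin n → ℝ) → SQ) (x : Fin n → ℝ) : SQ :=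
  ⟨pd l (fun y => (F y).re) x, pd l (fun y => (F y).imI) x,
   pd l (fun y => (F y).imJ) x, pd l (fun y => (F y).imK) x⟩

/-- The operator `∂̄` applied on the left. -/
def dbar (F : (Fin 4 → ℝ) → SQ) (x : Fin 4 → ℝ) : SQ :=
  pdQ 0 F x + qi * pdQ 1 F x - qj * pdQ 2 F x - qk * pdQ 3 F x

/-- The operator `∂̄` applied on the right. -/
def dbarR (F : (Fin 4 → ℝ) → SQ) (x : Fin 4 → ℝ) : SQ :=
  pdQ 0 F x + pdQ 1 F x * qi - pdQ 2 F x * qj - pdQ 3 F x * qk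

/-- The operator `∂` applied on the left. -/
def del (F : (Fin 4 → ℝ) → SQ) (x : Fin 4 → ℝ) : SQ :=
  pdQ 0 F x - qi * pdQ 1 F x + qj * pdQ 2 F x + qk * pdQ 3 F x

/-- The operator `∂` applied on the right. -/
def delR (F : (Fin 4 → ℝ) → SQ) (x : Fin 4 → ℝ) : SQ :=
  pdQ 0 F x - pdQ 1 F x * qi + pdQ 2 F x * qj + pdQ 3 F x * qk

/-- The identification of `ℝ⁴` with the split-quaternions. -/
def toQ (x : Fin 4 → ℝ) : SQ := ⟨x 0, x 1, x 2, x 3⟩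

/-- The identification of the split-quaternions with `ℝ⁴`. -/
def toT (Z : SQ) : Fin 4 → ℝ := ![Z.re, Z.imI, Z.imJ, Z.imK]

/-- The ultrahyperbolic operator `Δ₍₂,₂₎` on `ℝ^{2,2}`. -/
def box (f : (Fin 4 → ℝ) → ℝ) (x : Fin 4 → ℝ) : ℝ :=
  pd 0 (pd 0 f) x + pd 1 (pd 1 f) x - pd 2 (pd 2 f) x - pd 3 (pd 3 f) x


lemma pd_congr {g h : (Fin 4 → ℝ) → ℝ} {x} (he : g =ᶠ[𝓝 x] h) (l : Fin 4) :
    pd l g x = pd l h x := by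
  unfold pd; rw [he.fderiv_eq]

lemma pd_neg (l : Fin 4) (g : (Fin 4 → ℝ) → ℝ) (x : Fin 4 → ℝ) :
    pd l (fun y => -g y) x = - pd l g x := by
  unfold pd; rw [fderiv_fun_neg]; simp

lemma pd_symm {f : (Fin 4 → ℝ) → ℝ} {x} (hf : ContDiffAt ℝ 2 f x) (a b : Fin 4) :
    pd a (pd b f) x = pd b (pd a f) x := by
  have hd : DifferentiableAt ℝ (fderiv ℝ f) x :=
    (hf.fderiv_right (m := 1) le_rfl).differentiableAt one_ne_zero
  have hsym := hf.isSymmSndFDerivAt (by simp [minSmoothness_of_isRCLikeNormedField])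
  have key : ∀ v w : Fin 4 → ℝ,
      fderiv ℝ (fun y => fderiv ℝ f y v) x w = fderiv ℝ (fderiv ℝ f) x w v := by
    intro v w
    rw [fderiv_clm_apply hd (differentiableAt_const v)]
    simp
  unfold pd
  rw [key, key, hsym]

/-- components of a function with C² components satisfying the left
Cl(1,1)-differentiability system on an open set `U` are ultra-hyperbolic on `U`. -/
theorem leftDiffSystem_ultrahyperbolic (U : Set (Fin 4 → ℝ)) (hU : IsOpen U)
    (f₀ f₁ f₂ f₃ : (Fin 4 → ℝ) → ℝ)
    (h₀ : ContDiffOn ℝ 2 f₀ U) (h₁ : ContDiffOn ℝ 2 f₁ U)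
    (h₂ : ContDiffOn ℝ 2 f₂ U) (h₃ : ContDiffOn ℝ 2 f₃ U)
    (hsys : ∀ x ∈ U,
      (pd 0 f₀ x = pd 1 f₁ x ∧ pd 1 f₁ x = pd 2 f₂ x ∧ pd 2 f₂ x = pd 3 f₃ x) ∧
      (pd 0 f₁ x = -pd 1 f₀ x ∧ -pd 1 f₀ x = -pd 2 f₃ x ∧ -pd 2 f₃ x = pd 3 f₂ x) ∧
      (pd 0 f₂ x = pd 1 f₃ x ∧ pd 1 f₃ x = pd 2 f₀ x ∧ pd 2 f₀ x = pd 3 f₁ x) ∧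
      (pd 0 f₃ x = -pd 1 f₂ x ∧ -pd 1 f₂ x = -pd 2 f₁ x ∧ -pd 2 f₁ x = pd 3 f₀ x)) :
    ∀ x ∈ U, box f₀ x = 0 ∧ box f₁ x = 0 ∧ box f₂ x = 0 ∧ box f₃ x = 0 := by
  intro x hx
  have hf₀ : ContDiffAt ℝ 2 f₀ x := (h₀ x hx).contDiffAt (hU.mem_nhds hx)
  have hf₁ : ContDiffAt ℝ 2 f₁ x := (h₁ x hx).contDiffAt (hU.mem_nhds hx)
  have hf₂ : ContDiffAt ℝ 2 f₂ x := (h₂ x hx).contDiffAt (hU.mem_nhds hx)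
  have hf₃ : ContDiffAt ℝ 2 f₃ x := (h₃ x hx).contDiffAt (hU.mem_nhds hx)
  have hmem := hU.mem_nhds hx
  -- eventual equalities near x
  have A0 : pd 0 f₀ =ᶠ[𝓝 x] pd 1 f₁ := by
    filter_upwards [hmem] with y hy; have h := hsys y hy; linarith [h.1.1]
  have A1 : pd 1 f₀ =ᶠ[𝓝 x] fun y => -pd 0 f₁ y := by
    filter_upwards [hmem] with y hy; have h := hsys y hy; linarith [h.2.1.1]
  have A2 : pd 2 f₀ =ᶠ[𝓝 x] pd 3 f₁ := by
    filter_upwards [hmem] with y hy; have h := hsys y hy; linarith [h.2.2.1.2.2]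
  have A3 : pd 3 f₀ =ᶠ[𝓝 x] fun y => -pd 2 f₁ y := by
    filter_upwards [hmem] with y hy; have h := hsys y hy; linarith [h.2.2.2.2.2]
  have B0 : pd 0 f₁ =ᶠ[𝓝 x] fun y => -pd 1 f₀ y := by
    filter_upwards [hmem] with y hy; have h := hsys y hy; linarith [h.2.1.1]
  have B1 : pd 1 f₁ =ᶠ[𝓝 x] pd 0 f₀ := by
    filter_upwards [hmem] with y hy; have h := hsys y hy; linarith [h.1.1]
  have B2 : pd 2 f₁ =ᶠ[𝓝 x] fun y => -pd 3 f₀ y := by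
    filter_upwards [hmem] with y hy; have h := hsys y hy; linarith [h.2.2.2.2.2]
  have B3 : pd 3 f₁ =ᶠ[𝓝 x] pd 2 f₀ := by
    filter_upwards [hmem] with y hy; have h := hsys y hy; linarith [h.2.2.1.2.2]
  have C0 : pd 0 f₂ =ᶠ[𝓝 x] pd 1 f₃ := by
    filter_upwards [hmem] with y hy; have h := hsys y hy; linarith [h.2.2.1.1]
  have C1 : pd 1 f₂ =ᶠ[𝓝 x] fun y => -pd 0 f₃ y := by
    filter_upwards [hmem] with y hy; have h := hsys y hy; linarith [h.2.2.2.1]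
  have C2 : pd 2 f₂ =ᶠ[𝓝 x] pd 3 f₃ := by
    filter_upwards [hmem] with y hy; have h := hsys y hy; linarith [h.1.2.2]
  have C3 : pd 3 f₂ =ᶠ[𝓝 x] fun y => -pd 2 f₃ y := by
    filter_upwards [hmem] with y hy; have h := hsys y hy; linarith [h.2.1.2.2]
  have D0 : pd 0 f₃ =ᶠ[𝓝 x] fun y => -pd 1 f₂ y := by
    filter_upwards [hmem] with y hy; have h := hsys y hy; linarith [h.2.2.2.1]
  have D1 : pd 1 f₃ =ᶠ[𝓝 x] pd 0 f₂ := by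
    filter_upwards [hmem] with y hy; have h := hsys y hy; linarith [h.2.2.1.1]
  have D2 : pd 2 f₃ =ᶠ[𝓝 x] fun y => -pd 3 f₂ y := by
    filter_upwards [hmem] with y hy; have h := hsys y hy; linarith [h.2.1.2.2]
  have D3 : pd 3 f₃ =ᶠ[𝓝 x] pd 2 f₂ := by
    filter_upwards [hmem] with y hy; have h := hsys y hy; linarith [h.1.2.2]
  refine ⟨?_, ?_, ?_, ?_⟩
  · unfold box
    rw [pd_congr A0 0, pd_congr A1 1, pd_congr A2 2, pd_congr A3 3, pd_neg, pd_neg]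
    have s1 := pd_symm hf₁ 0 1
    have s2 := pd_symm hf₁ 2 3
    linarith
  · unfold box
    rw [pd_congr B0 0, pd_congr B1 1, pd_congr B2 2, pd_congr B3 3, pd_neg, pd_neg]
    have s1 := pd_symm hf₀ 0 1
    have s2 := pd_symm hf₀ 2 3
    linarith
  · unfold box
    rw [pd_congr C0 0, pd_congr C1 1, pd_congr C2 2, pd_congr C3 3, pd_neg, pd_neg]
    have s1 := pd_symm hf₃ 0 1
    have s2 := pd_symm hf₃ 2 3
    linarith
  · unfold box
    rw [pd_congr D0 0, pd_congr D1 1, pd_congr D2 2, pd_congr D3 3, pd_neg, pd_neg]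
    have s1 := pd_symm hf₂ 0 1
    have s2 := pd_symm hf₂ 2 3
    linarith


end
end

section
/- Let U ⊆ ℝ⁴ be open and let F : U → Cl(1,1) have C² components. If F satisfies at least one of the equations ∂̄F = 0, F∂̄ = 0, ∂F = 0, or F∂ = 0 on U, then each of the four real components of F is ultra-hyperbolic on U, i.e., satisfies John's equation Δ₍₂,₂₎u = 0 on U. -/
open Filter Topology Quaternion

noncomputable section

section AuxLemmas

variable {U : Set (Fin 4 → ℝ)} {f p q r : (Fin 4 → ℝ) → ℝ} {x : Fin 4 → ℝ}

lemma contDiffAt_pd (hU : IsOpen U) (hf : ContDiffOn ℝ 2 f U) (hx : x ∈ U) (m : Fin 4) :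
    ContDiffAt ℝ 1 (pd m f) x := by
  have h : ContDiffAt ℝ 2 f x := hf.contDiffAt (hU.mem_nhds hx)
  have h' : ContDiffAt ℝ 1 (fderiv ℝ f) x := h.fderiv_right (by norm_num)
  exact (ContinuousLinearMap.apply ℝ ℝ (Pi.single m 1 : Fin 4 → ℝ)).contDiff.contDiffAt.comp x h'

lemma pd_comm (hU : IsOpen U) (hf : ContDiffOn ℝ 2 f U) (hx : x ∈ U) (l m : Fin 4) :
    pd l (pd m f) x = pd m (pd l f) x := by
  have hdf : DifferentiableAt ℝ (fderiv ℝ f) x :=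
    ((hf.contDiffAt (hU.mem_nhds hx)).fderiv_right (m := 1) (by norm_num)).differentiableAt one_ne_zero
  have hf1 : ∀ᶠ y in 𝓝 x, HasFDerivAt f (fderiv ℝ f y) y := by
    filter_upwards [hU.mem_nhds hx] with y hy
    exact (((hf.differentiableOn (by norm_num)) y hy).differentiableAt
      (hU.mem_nhds hy)).hasFDerivAt
  have hsymm := second_derivative_symmetric_of_eventually hf1 hdf.hasFDerivAt
  have key : ∀ a b : Fin 4,
      pd a (pd b f) x = fderiv ℝ (fderiv ℝ f) x (Pi.single a 1) (Pi.single b 1) := by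
    intro a b
    rw [show pd a (pd b f) x = fderiv ℝ (fun y => (fderiv ℝ f y) (Pi.single b 1)) x
      (Pi.single a 1) from rfl]
    rw [fderiv_clm_apply hdf (differentiableAt_const _)]
    simp
  rw [key, key, hsymm]

lemma pd_congr_nhds {g : (Fin 4 → ℝ) → ℝ} (h : f =ᶠ[𝓝 x] g) (l : Fin 4) :
    pd l f x = pd l g x := by
  unfold pd; rw [h.fderiv_eq]

lemma pd_comb (hp : DifferentiableAt ℝ p x) (hq : DifferentiableAt ℝ q x)
    (hr : DifferentiableAt ℝ r x) (e₁ e₂ e₃ : ℝ) (l : Fin 4) :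
    pd l (fun y => e₁ * p y + e₂ * q y + e₃ * r y) x
      = e₁ * pd l p x + e₂ * pd l q x + e₃ * pd l r x := by
  have h := ((hp.hasFDerivAt.const_mul e₁).add (hq.hasFDerivAt.const_mul e₂)).add
    (hr.hasFDerivAt.const_mul e₃)
  unfold pd
  rw [(show HasFDerivAt (fun y => e₁ * p y + e₂ * q y + e₃ * r y) _ x from h).fderiv]
  simp [mul_comm]

lemma key (hU : IsOpen U) {u v₁ v₂ v₃ : (Fin 4 → ℝ) → ℝ}
    (hv₁ : ContDiffOn ℝ 2 v₁ U) (hv₂ : ContDiffOn ℝ 2 v₂ U) (hv₃ : ContDiffOn ℝ 2 v₃ U)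
    {ε₁ ε₂ ε₃ ε₄ ε₅ ε₆ : ℝ}
    (h1 : ∀ y ∈ U, pd 0 u y = ε₁ * pd 1 v₁ y + ε₂ * pd 2 v₂ y + ε₃ * pd 3 v₃ y)
    (h2 : ∀ y ∈ U, pd 1 u y = -ε₁ * pd 0 v₁ y + ε₄ * pd 2 v₃ y + ε₅ * pd 3 v₂ y)
    (h3 : ∀ y ∈ U, pd 2 u y = ε₂ * pd 0 v₂ y + ε₄ * pd 1 v₃ y + ε₆ * pd 3 v₁ y)
    (h4 : ∀ y ∈ U, pd 3 u y = ε₃ * pd 0 v₃ y + ε₅ * pd 1 v₂ y + -ε₆ * pd 2 v₁ y)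
    (hx : x ∈ U) : box u x = 0 := by
  have hnhds : U ∈ 𝓝 x := hU.mem_nhds hx
  have E : ∀ (l : Fin 4) (e₁ e₂ e₃ : ℝ) (a b c : Fin 4) (w₁ w₂ w₃ : (Fin 4 → ℝ) → ℝ),
      ContDiffOn ℝ 2 w₁ U → ContDiffOn ℝ 2 w₂ U → ContDiffOn ℝ 2 w₃ U →
      (∀ y ∈ U, pd l u y = e₁ * pd a w₁ y + e₂ * pd b w₂ y + e₃ * pd c w₃ y) → ∀ m : Fin 4,
      pd m (pd l u) x = e₁ * pd m (pd a w₁) x + e₂ * pd m (pd b w₂) x + e₃ * pd m (pd c w₃) x := by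
    intro l e₁ e₂ e₃ a b c w₁ w₂ w₃ hw₁ hw₂ hw₃ h m
    have heq : pd l u =ᶠ[𝓝 x] fun y => e₁ * pd a w₁ y + e₂ * pd b w₂ y + e₃ * pd c w₃ y := by
      filter_upwards [hnhds] with y hy using h y hy
    rw [pd_congr_nhds heq,
      pd_comb ((contDiffAt_pd hU hw₁ hx a).differentiableAt one_ne_zero)
        ((contDiffAt_pd hU hw₂ hx b).differentiableAt one_ne_zero)
        ((contDiffAt_pd hU hw₃ hx c).differentiableAt one_ne_zero)]
  have E1 := E 0 ε₁ ε₂ ε₃ 1 2 3 v₁ v₂ v₃ hv₁ hv₂ hv₃ h1 0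
  have E2 := E 1 (-ε₁) ε₄ ε₅ 0 2 3 v₁ v₃ v₂ hv₁ hv₃ hv₂ h2 1
  have E3 := E 2 ε₂ ε₄ ε₆ 0 1 3 v₂ v₃ v₁ hv₂ hv₃ hv₁ h3 2
  have E4 := E 3 ε₃ ε₅ (-ε₆) 0 1 2 v₃ v₂ v₁ hv₃ hv₂ hv₁ h4 3
  have c1 := pd_comm hU hv₁ hx 0 1
  have c2 := pd_comm hU hv₂ hx 0 2
  have c3 := pd_comm hU hv₃ hx 0 3
  have c4 := pd_comm hU hv₃ hx 1 2
  have c5 := pd_comm hU hv₂ hx 1 3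
  have c6 := pd_comm hU hv₁ hx 2 3
  unfold box
  rw [E1, E2, E3, E4]
  linear_combination ε₁ * c1 + ε₂ * c2 + ε₃ * c3 + ε₄ * c4 + ε₅ * c5 - ε₆ * c6

end AuxLemmas

/-- if `F` has C² components on an open set `U` and satisfies one of
`∂̄F = 0`, `F∂̄ = 0`, `∂F = 0`, `F∂ = 0` on `U`, then each real component of `F`
satisfies John's equation `Δ₍₂,₂₎u = 0` on `U`. -/
theorem regular_components_ultrahyperbolic (U : Set (Fin 4 → ℝ)) (hU : IsOpen U)
    (F : (Fin 4 → ℝ) → SQ)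
    (h₀ : ContDiffOn ℝ 2 (fun x => (F x).re) U)
    (h₁ : ContDiffOn ℝ 2 (fun x => (F x).imI) U)
    (h₂ : ContDiffOn ℝ 2 (fun x => (F x).imJ) U)
    (h₃ : ContDiffOn ℝ 2 (fun x => (F x).imK) U)
    (hreg : (∀ x ∈ U, dbar F x = 0) ∨ (∀ x ∈ U, dbarR F x = 0) ∨
            (∀ x ∈ U, del F x = 0) ∨ (∀ x ∈ U, delR F x = 0)) :
    ∀ x ∈ U,
      box (fun y => (F y).re) x = 0 ∧ box (fun y => (F y).imI) x = 0 ∧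
      box (fun y => (F y).imJ) x = 0 ∧ box (fun y => (F y).imK) x = 0 := by
  intro x hx
  set A : (Fin 4 → ℝ) → ℝ := fun z => (F z).re with hA
  set B : (Fin 4 → ℝ) → ℝ := fun z => (F z).imI with hB
  set C : (Fin 4 → ℝ) → ℝ := fun z => (F z).imJ with hC
  set D : (Fin 4 → ℝ) → ℝ := fun z => (F z).imK with hD
  have hA2 : ContDiffOn ℝ 2 A U := h₀
  have hB2 : ContDiffOn ℝ 2 B U := h₁
  have hC2 : ContDiffOn ℝ 2 C U := h₂
  have hD2 : ContDiffOn ℝ 2 D U := h₃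
  rcases hreg with h | h | h | h
  · -- case dbar
    have E : ∀ y ∈ U,
        (pd 0 A y - pd 1 B y - pd 2 C y - pd 3 D y = 0) ∧
        (pd 0 B y + pd 1 A y + pd 2 D y - pd 3 C y = 0) ∧
        (pd 0 C y - pd 1 D y - pd 2 A y - pd 3 B y = 0) ∧
        (pd 0 D y + pd 1 C y + pd 2 B y - pd 3 A y = 0) := by
      intro y hy
      have h' := h y hy
      rw [QuaternionAlgebra.ext_iff] at h'
      simp only [dbar, pdQ, qi, qj, qk, QuaternionAlgebra.re_add, QuaternionAlgebra.re_sub, QuaternionAlgebra.re_mul, QuaternionAlgebra.imI_add, QuaternionAlgebra.imI_sub, QuaternionAlgebra.imI_mul, QuaternionAlgebra.imJ_add, QuaternionAlgebra.imJ_sub, QuaternionAlgebra.imJ_mul, QuaternionAlgebra.imK_add, QuaternionAlgebra.imK_sub, QuaternionAlgebra.imK_mul, QuaternionAlgebra.re_zero, QuaternionAlgebra.imI_zero, QuaternionAlgebra.imJ_zero, QuaternionAlgebra.imK_zero] at h'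
      obtain ⟨e1, e2, e3, e4⟩ := h'
      refine ⟨by linarith, by linarith, by linarith, by linarith⟩
    exact ⟨key hU hB2 hC2 hD2 (ε₁ := (1 : ℝ)) (ε₂ := (1 : ℝ)) (ε₃ := (1 : ℝ)) (ε₄ := (-1 : ℝ)) (ε₅ := (1 : ℝ)) (ε₆ := (-1 : ℝ))
        (fun y hy => by obtain ⟨e1, e2, e3, e4⟩ := E y hy; linarith)
        (fun y hy => by obtain ⟨e1, e2, e3, e4⟩ := E y hy; linarith)
        (fun y hy => by obtain ⟨e1, e2, e3, e4⟩ := E y hy; linarith)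
        (fun y hy => by obtain ⟨e1, e2, e3, e4⟩ := E y hy; linarith) hx,
      key hU hA2 hD2 hC2 (ε₁ := (-1 : ℝ)) (ε₂ := (-1 : ℝ)) (ε₃ := (1 : ℝ)) (ε₄ := (-1 : ℝ)) (ε₅ := (-1 : ℝ)) (ε₆ := (1 : ℝ))
        (fun y hy => by obtain ⟨e1, e2, e3, e4⟩ := E y hy; linarith)
        (fun y hy => by obtain ⟨e1, e2, e3, e4⟩ := E y hy; linarith)
        (fun y hy => by obtain ⟨e1, e2, e3, e4⟩ := E y hy; linarith)
        (fun y hy => by obtain ⟨e1, e2, e3, e4⟩ := E y hy; linarith) hx,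
      key hU hD2 hA2 hB2 (ε₁ := (1 : ℝ)) (ε₂ := (1 : ℝ)) (ε₃ := (1 : ℝ)) (ε₄ := (-1 : ℝ)) (ε₅ := (1 : ℝ)) (ε₆ := (-1 : ℝ))
        (fun y hy => by obtain ⟨e1, e2, e3, e4⟩ := E y hy; linarith)
        (fun y hy => by obtain ⟨e1, e2, e3, e4⟩ := E y hy; linarith)
        (fun y hy => by obtain ⟨e1, e2, e3, e4⟩ := E y hy; linarith)
        (fun y hy => by obtain ⟨e1, e2, e3, e4⟩ := E y hy; linarith) hx,
      key hU hC2 hB2 hA2 (ε₁ := (-1 : ℝ)) (ε₂ := (-1 : ℝ)) (ε₃ := (1 : ℝ)) (ε₄ := (-1 : ℝ)) (ε₅ := (-1 : ℝ)) (ε₆ := (1 : ℝ))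
        (fun y hy => by obtain ⟨e1, e2, e3, e4⟩ := E y hy; linarith)
        (fun y hy => by obtain ⟨e1, e2, e3, e4⟩ := E y hy; linarith)
        (fun y hy => by obtain ⟨e1, e2, e3, e4⟩ := E y hy; linarith)
        (fun y hy => by obtain ⟨e1, e2, e3, e4⟩ := E y hy; linarith) hx⟩
  · -- case dbarR
    have E : ∀ y ∈ U,
        (pd 0 A y - pd 1 B y - pd 2 C y - pd 3 D y = 0) ∧
        (pd 0 B y + pd 1 A y - pd 2 D y + pd 3 C y = 0) ∧
        (pd 0 C y + pd 1 D y - pd 2 A y + pd 3 B y = 0) ∧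
        (pd 0 D y - pd 1 C y - pd 2 B y - pd 3 A y = 0) := by
      intro y hy
      have h' := h y hy
      rw [QuaternionAlgebra.ext_iff] at h'
      simp only [dbarR, pdQ, qi, qj, qk, QuaternionAlgebra.re_add, QuaternionAlgebra.re_sub, QuaternionAlgebra.re_mul, QuaternionAlgebra.imI_add, QuaternionAlgebra.imI_sub, QuaternionAlgebra.imI_mul, QuaternionAlgebra.imJ_add, QuaternionAlgebra.imJ_sub, QuaternionAlgebra.imJ_mul, QuaternionAlgebra.imK_add, QuaternionAlgebra.imK_sub, QuaternionAlgebra.imK_mul, QuaternionAlgebra.re_zero, QuaternionAlgebra.imI_zero, QuaternionAlgebra.imJ_zero, QuaternionAlgebra.imK_zero] at h'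
      obtain ⟨e1, e2, e3, e4⟩ := h'
      refine ⟨by linarith, by linarith, by linarith, by linarith⟩
    exact ⟨key hU hB2 hC2 hD2 (ε₁ := (1 : ℝ)) (ε₂ := (1 : ℝ)) (ε₃ := (1 : ℝ)) (ε₄ := (1 : ℝ)) (ε₅ := (-1 : ℝ)) (ε₆ := (1 : ℝ))
        (fun y hy => by obtain ⟨e1, e2, e3, e4⟩ := E y hy; linarith)
        (fun y hy => by obtain ⟨e1, e2, e3, e4⟩ := E y hy; linarith)
        (fun y hy => by obtain ⟨e1, e2, e3, e4⟩ := E y hy; linarith)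
        (fun y hy => by obtain ⟨e1, e2, e3, e4⟩ := E y hy; linarith) hx,
      key hU hA2 hD2 hC2 (ε₁ := (-1 : ℝ)) (ε₂ := (1 : ℝ)) (ε₃ := (-1 : ℝ)) (ε₄ := (-1 : ℝ)) (ε₅ := (-1 : ℝ)) (ε₆ := (-1 : ℝ))
        (fun y hy => by obtain ⟨e1, e2, e3, e4⟩ := E y hy; linarith)
        (fun y hy => by obtain ⟨e1, e2, e3, e4⟩ := E y hy; linarith)
        (fun y hy => by obtain ⟨e1, e2, e3, e4⟩ := E y hy; linarith)
        (fun y hy => by obtain ⟨e1, e2, e3, e4⟩ := E y hy; linarith) hx,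
      key hU hD2 hA2 hB2 (ε₁ := (-1 : ℝ)) (ε₂ := (1 : ℝ)) (ε₃ := (-1 : ℝ)) (ε₄ := (-1 : ℝ)) (ε₅ := (-1 : ℝ)) (ε₆ := (-1 : ℝ))
        (fun y hy => by obtain ⟨e1, e2, e3, e4⟩ := E y hy; linarith)
        (fun y hy => by obtain ⟨e1, e2, e3, e4⟩ := E y hy; linarith)
        (fun y hy => by obtain ⟨e1, e2, e3, e4⟩ := E y hy; linarith)
        (fun y hy => by obtain ⟨e1, e2, e3, e4⟩ := E y hy; linarith) hx,
      key hU hC2 hB2 hA2 (ε₁ := (1 : ℝ)) (ε₂ := (1 : ℝ)) (ε₃ := (1 : ℝ)) (ε₄ := (1 : ℝ)) (ε₅ := (-1 : ℝ)) (ε₆ := (1 : ℝ))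
        (fun y hy => by obtain ⟨e1, e2, e3, e4⟩ := E y hy; linarith)
        (fun y hy => by obtain ⟨e1, e2, e3, e4⟩ := E y hy; linarith)
        (fun y hy => by obtain ⟨e1, e2, e3, e4⟩ := E y hy; linarith)
        (fun y hy => by obtain ⟨e1, e2, e3, e4⟩ := E y hy; linarith) hx⟩
  · -- case del
    have E : ∀ y ∈ U,
        (pd 0 A y + pd 1 B y + pd 2 C y + pd 3 D y = 0) ∧
        (pd 0 B y - pd 1 A y - pd 2 D y + pd 3 C y = 0) ∧
        (pd 0 C y + pd 1 D y + pd 2 A y + pd 3 B y = 0) ∧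
        (pd 0 D y - pd 1 C y - pd 2 B y + pd 3 A y = 0) := by
      intro y hy
      have h' := h y hy
      rw [QuaternionAlgebra.ext_iff] at h'
      simp only [del, pdQ, qi, qj, qk, QuaternionAlgebra.re_add, QuaternionAlgebra.re_sub, QuaternionAlgebra.re_mul, QuaternionAlgebra.imI_add, QuaternionAlgebra.imI_sub, QuaternionAlgebra.imI_mul, QuaternionAlgebra.imJ_add, QuaternionAlgebra.imJ_sub, QuaternionAlgebra.imJ_mul, QuaternionAlgebra.imK_add, QuaternionAlgebra.imK_sub, QuaternionAlgebra.imK_mul, QuaternionAlgebra.re_zero, QuaternionAlgebra.imI_zero, QuaternionAlgebra.imJ_zero, QuaternionAlgebra.imK_zero] at h'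
      obtain ⟨e1, e2, e3, e4⟩ := h'
      refine ⟨by linarith, by linarith, by linarith, by linarith⟩
    exact ⟨key hU hB2 hC2 hD2 (ε₁ := (-1 : ℝ)) (ε₂ := (-1 : ℝ)) (ε₃ := (-1 : ℝ)) (ε₄ := (-1 : ℝ)) (ε₅ := (1 : ℝ)) (ε₆ := (-1 : ℝ))
        (fun y hy => by obtain ⟨e1, e2, e3, e4⟩ := E y hy; linarith)
        (fun y hy => by obtain ⟨e1, e2, e3, e4⟩ := E y hy; linarith)
        (fun y hy => by obtain ⟨e1, e2, e3, e4⟩ := E y hy; linarith)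
        (fun y hy => by obtain ⟨e1, e2, e3, e4⟩ := E y hy; linarith) hx,
      key hU hA2 hD2 hC2 (ε₁ := (1 : ℝ)) (ε₂ := (1 : ℝ)) (ε₃ := (-1 : ℝ)) (ε₄ := (-1 : ℝ)) (ε₅ := (-1 : ℝ)) (ε₆ := (1 : ℝ))
        (fun y hy => by obtain ⟨e1, e2, e3, e4⟩ := E y hy; linarith)
        (fun y hy => by obtain ⟨e1, e2, e3, e4⟩ := E y hy; linarith)
        (fun y hy => by obtain ⟨e1, e2, e3, e4⟩ := E y hy; linarith)
        (fun y hy => by obtain ⟨e1, e2, e3, e4⟩ := E y hy; linarith) hx,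
      key hU hD2 hA2 hB2 (ε₁ := (-1 : ℝ)) (ε₂ := (-1 : ℝ)) (ε₃ := (-1 : ℝ)) (ε₄ := (-1 : ℝ)) (ε₅ := (1 : ℝ)) (ε₆ := (-1 : ℝ))
        (fun y hy => by obtain ⟨e1, e2, e3, e4⟩ := E y hy; linarith)
        (fun y hy => by obtain ⟨e1, e2, e3, e4⟩ := E y hy; linarith)
        (fun y hy => by obtain ⟨e1, e2, e3, e4⟩ := E y hy; linarith)
        (fun y hy => by obtain ⟨e1, e2, e3, e4⟩ := E y hy; linarith) hx,
      key hU hC2 hB2 hA2 (ε₁ := (1 : ℝ)) (ε₂ := (1 : ℝ)) (ε₃ := (-1 : ℝ)) (ε₄ := (-1 : ℝ)) (ε₅ := (-1 : ℝ)) (ε₆ := (1 : ℝ))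
        (fun y hy => by obtain ⟨e1, e2, e3, e4⟩ := E y hy; linarith)
        (fun y hy => by obtain ⟨e1, e2, e3, e4⟩ := E y hy; linarith)
        (fun y hy => by obtain ⟨e1, e2, e3, e4⟩ := E y hy; linarith)
        (fun y hy => by obtain ⟨e1, e2, e3, e4⟩ := E y hy; linarith) hx⟩
  · -- case delR
    have E : ∀ y ∈ U,
        (pd 0 A y + pd 1 B y + pd 2 C y + pd 3 D y = 0) ∧
        (pd 0 B y - pd 1 A y + pd 2 D y - pd 3 C y = 0) ∧
        (pd 0 C y - pd 1 D y + pd 2 A y - pd 3 B y = 0) ∧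
        (pd 0 D y + pd 1 C y + pd 2 B y + pd 3 A y = 0) := by
      intro y hy
      have h' := h y hy
      rw [QuaternionAlgebra.ext_iff] at h'
      simp only [delR, pdQ, qi, qj, qk, QuaternionAlgebra.re_add, QuaternionAlgebra.re_sub, QuaternionAlgebra.re_mul, QuaternionAlgebra.imI_add, QuaternionAlgebra.imI_sub, QuaternionAlgebra.imI_mul, QuaternionAlgebra.imJ_add, QuaternionAlgebra.imJ_sub, QuaternionAlgebra.imJ_mul, QuaternionAlgebra.imK_add, QuaternionAlgebra.imK_sub, QuaternionAlgebra.imK_mul, QuaternionAlgebra.re_zero, QuaternionAlgebra.imI_zero, QuaternionAlgebra.imJ_zero, QuaternionAlgebra.imK_zero] at h'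
      obtain ⟨e1, e2, e3, e4⟩ := h'
      refine ⟨by linarith, by linarith, by linarith, by linarith⟩
    exact ⟨key hU hB2 hC2 hD2 (ε₁ := (-1 : ℝ)) (ε₂ := (-1 : ℝ)) (ε₃ := (-1 : ℝ)) (ε₄ := (1 : ℝ)) (ε₅ := (-1 : ℝ)) (ε₆ := (1 : ℝ))
        (fun y hy => by obtain ⟨e1, e2, e3, e4⟩ := E y hy; linarith)
        (fun y hy => by obtain ⟨e1, e2, e3, e4⟩ := E y hy; linarith)
        (fun y hy => by obtain ⟨e1, e2, e3, e4⟩ := E y hy; linarith)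
        (fun y hy => by obtain ⟨e1, e2, e3, e4⟩ := E y hy; linarith) hx,
      key hU hA2 hD2 hC2 (ε₁ := (1 : ℝ)) (ε₂ := (-1 : ℝ)) (ε₃ := (1 : ℝ)) (ε₄ := (-1 : ℝ)) (ε₅ := (-1 : ℝ)) (ε₆ := (-1 : ℝ))
        (fun y hy => by obtain ⟨e1, e2, e3, e4⟩ := E y hy; linarith)
        (fun y hy => by obtain ⟨e1, e2, e3, e4⟩ := E y hy; linarith)
        (fun y hy => by obtain ⟨e1, e2, e3, e4⟩ := E y hy; linarith)
        (fun y hy => by obtain ⟨e1, e2, e3, e4⟩ := E y hy; linarith) hx,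
      key hU hD2 hA2 hB2 (ε₁ := (1 : ℝ)) (ε₂ := (-1 : ℝ)) (ε₃ := (1 : ℝ)) (ε₄ := (-1 : ℝ)) (ε₅ := (-1 : ℝ)) (ε₆ := (-1 : ℝ))
        (fun y hy => by obtain ⟨e1, e2, e3, e4⟩ := E y hy; linarith)
        (fun y hy => by obtain ⟨e1, e2, e3, e4⟩ := E y hy; linarith)
        (fun y hy => by obtain ⟨e1, e2, e3, e4⟩ := E y hy; linarith)
        (fun y hy => by obtain ⟨e1, e2, e3, e4⟩ := E y hy; linarith) hx,
      key hU hC2 hB2 hA2 (ε₁ := (-1 : ℝ)) (ε₂ := (-1 : ℝ)) (ε₃ := (-1 : ℝ)) (ε₄ := (1 : ℝ)) (ε₅ := (-1 : ℝ)) (ε₆ := (1 : ℝ))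
        (fun y hy => by obtain ⟨e1, e2, e3, e4⟩ := E y hy; linarith)
        (fun y hy => by obtain ⟨e1, e2, e3, e4⟩ := E y hy; linarith)
        (fun y hy => by obtain ⟨e1, e2, e3, e4⟩ := E y hy; linarith)
        (fun y hy => by obtain ⟨e1, e2, e3, e4⟩ := E y hy; linarith) hx⟩


end
end
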